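/- Define $G_1(\alpha) = \Big(\int_0^1 \big(\tfrac{1 - 2\alpha + 2\alpha\cos(1/\sqrt{\alpha})}{\sin(1/\sqrt{\alpha})}\sin(x/\sqrt{\alpha}) - 2\alpha\cos(x/\sqrt{\alpha}) - x^2 + 2\alpha\big)^2 dx\Big)^{1/2}$ for $\alpha \in [0.1, 0.3]$. Then the equation $\alpha = G_1(\alpha)$ has at least one solution in the interval $[0.1, 0.3]$. -/

import Mathlib

private lemma nonneg_of_deriv {f f' : ℝ → ℝ} (hd : ∀ t, HasDerivAt f (f' t) t)
    (h0 : f 0 = 0) (h' : ∀ t, 0 ≤ t → 0 ≤ f' t) : ∀ t, 0 ≤ t → 0 ≤ f t := by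
  intro t ht
  have hm : MonotoneOn f (Set.Ici (0:ℝ)) := by
    apply monotoneOn_of_deriv_nonneg (convex_Ici 0)
    · exact (continuous_iff_continuousAt.2 fun x => (hd x).continuousAt).continuousOn
    · exact fun x _ => (hd x).differentiableAt.differentiableWithinAt
    · intro x hx
      rw [(hd x).deriv]
      exact h' x (le_of_lt (by simpa using hx))
  have := hm (Set.self_mem_Ici) (Set.mem_Ici.2 ht) ht
  linarith [h0 ▸ this]

private lemma sin_ge_t3 {t : ℝ} (ht : 0 ≤ t) : t - t^3/6 ≤ Real.sin t := by
  have := nonneg_of_deriv (f := fun t => Real.sin t - (t - t^3/6))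
    (f' := fun t => Real.cos t - (1 - t^2/2)) (fun x => by
      have h := (Real.hasDerivAt_sin x).sub ((hasDerivAt_id x).sub ((hasDerivAt_pow 3 x).div_const 6))
      exact h.congr_deriv (by ring))
    (by norm_num) (fun x _ => by nlinarith [Real.one_sub_sq_div_two_le_cos (x := x)]) t ht
  linarith

private lemma cos_le_t4 {t : ℝ} (ht : 0 ≤ t) : Real.cos t ≤ 1 - t^2/2 + t^4/24 := by
  have := nonneg_of_deriv (f := fun t => (1 - t^2/2 + t^4/24) - Real.cos t)
    (f' := fun t => -(t - t^3/6) + Real.sin t) (fun x => by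
      have h := (((hasDerivAt_const x (1:ℝ)).sub ((hasDerivAt_pow 2 x).div_const 2)).add
        ((hasDerivAt_pow 4 x).div_const 24)).sub (Real.hasDerivAt_cos x)
      exact h.congr_deriv (by push_cast; ring))
    (by norm_num) (fun x hx => by nlinarith [sin_ge_t3 hx]) t ht
  linarith

private lemma sin_le_t5 {t : ℝ} (ht : 0 ≤ t) : Real.sin t ≤ t - t^3/6 + t^5/120 := by
  have := nonneg_of_deriv (f := fun t => (t - t^3/6 + t^5/120) - Real.sin t)
    (f' := fun t => (1 - t^2/2 + t^4/24) - Real.cos t) (fun x => by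
      have h := (((hasDerivAt_id x).sub ((hasDerivAt_pow 3 x).div_const 6)).add
        ((hasDerivAt_pow 5 x).div_const 120)).sub (Real.hasDerivAt_sin x)
      exact h.congr_deriv (by push_cast; ring))
    (by norm_num) (fun x hx => by nlinarith [cos_le_t4 hx]) t ht
  linarith

private lemma cos_ge_t6 {t : ℝ} (ht : 0 ≤ t) : 1 - t^2/2 + t^4/24 - t^6/720 ≤ Real.cos t := by
  have := nonneg_of_deriv (f := fun t => Real.cos t - (1 - t^2/2 + t^4/24 - t^6/720))
    (f' := fun t => -Real.sin t + (t - t^3/6 + t^5/120)) (fun x => by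
      have h := (Real.hasDerivAt_cos x).sub ((((hasDerivAt_const x (1:ℝ)).sub
        ((hasDerivAt_pow 2 x).div_const 2)).add ((hasDerivAt_pow 4 x).div_const 24)).sub
        ((hasDerivAt_pow 6 x).div_const 720))
      exact h.congr_deriv (by push_cast; ring))
    (by norm_num) (fun x hx => by nlinarith [sin_le_t5 hx]) t ht
  linarith

private lemma sin_ge_t7 {t : ℝ} (ht : 0 ≤ t) :
    t - t^3/6 + t^5/120 - t^7/5040 ≤ Real.sin t := by
  have := nonneg_of_deriv (f := fun t => Real.sin t - (t - t^3/6 + t^5/120 - t^7/5040))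
    (f' := fun t => Real.cos t - (1 - t^2/2 + t^4/24 - t^6/720)) (fun x => by
      have h := (Real.hasDerivAt_sin x).sub ((((hasDerivAt_id x).sub
        ((hasDerivAt_pow 3 x).div_const 6)).add ((hasDerivAt_pow 5 x).div_const 120)).sub
        ((hasDerivAt_pow 7 x).div_const 5040))
      exact h.congr_deriv (by push_cast; ring))
    (by norm_num) (fun x hx => by nlinarith [cos_ge_t6 hx]) t ht
  linarith

private lemma cos_le_t8 {t : ℝ} (ht : 0 ≤ t) :
    Real.cos t ≤ 1 - t^2/2 + t^4/24 - t^6/720 + t^8/40320 := by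
  have := nonneg_of_deriv
    (f := fun t => (1 - t^2/2 + t^4/24 - t^6/720 + t^8/40320) - Real.cos t)
    (f' := fun t => -(t - t^3/6 + t^5/120 - t^7/5040) + Real.sin t) (fun x => by
      have h := ((((((hasDerivAt_const x (1:ℝ)).sub ((hasDerivAt_pow 2 x).div_const 2)).add
        ((hasDerivAt_pow 4 x).div_const 24)).sub ((hasDerivAt_pow 6 x).div_const 720)).add
        ((hasDerivAt_pow 8 x).div_const 40320))).sub (Real.hasDerivAt_cos x)
      exact h.congr_deriv (by push_cast; ring))
    (by norm_num) (fun x hx => by nlinarith [sin_ge_t7 hx]) t ht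
  linarith

private lemma sin_le_t9 {t : ℝ} (ht : 0 ≤ t) :
    Real.sin t ≤ t - t^3/6 + t^5/120 - t^7/5040 + t^9/362880 := by
  have := nonneg_of_deriv
    (f := fun t => (t - t^3/6 + t^5/120 - t^7/5040 + t^9/362880) - Real.sin t)
    (f' := fun t => (1 - t^2/2 + t^4/24 - t^6/720 + t^8/40320) - Real.cos t) (fun x => by
      have h := (((((hasDerivAt_id x).sub ((hasDerivAt_pow 3 x).div_const 6)).add
        ((hasDerivAt_pow 5 x).div_const 120)).sub ((hasDerivAt_pow 7 x).div_const 5040)).add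
        ((hasDerivAt_pow 9 x).div_const 362880)).sub (Real.hasDerivAt_sin x)
      exact h.congr_deriv (by push_cast; ring))
    (by norm_num) (fun x hx => by nlinarith [cos_le_t8 hx]) t ht
  linarith

private lemma lowEnd (A : ℝ)
    (hA : A = (1 - 2 * 0.2025 + 2 * 0.2025 * Real.cos (20/9)) / Real.sin (20/9)) :
    (0.0529:ℝ) ≤ ∫ x in (0:ℝ)..1,
      (A * Real.sin (x / 0.45) - 2 * 0.2025 * Real.cos (x / 0.45) - x ^ 2 + 2 * 0.2025) ^ 2 := by
  have hsu1 : Real.sin (20/9) ≤ 0.7954 := le_trans (sin_le_t9 (by norm_num)) (by norm_num)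
  have hsu2 : (0.7917:ℝ) ≤ Real.sin (20/9) := le_trans (by norm_num) (sin_ge_t7 (by norm_num))
  have hcu1 : Real.cos (20/9) ≤ -0.6055 := le_trans (cos_le_t8 (by norm_num)) (by norm_num)
  have hcu2 : (-0.6203:ℝ) ≤ Real.cos (20/9) := le_trans (by norm_num) (cos_ge_t6 (by norm_num))
  have hsupos : (0:ℝ) < Real.sin (20/9) := by linarith
  have hA1 : (0.432:ℝ) ≤ A := by
    rw [hA, le_div_iff₀ hsupos]; nlinarith
  have hA2 : A ≤ 0.442 := by
    rw [hA, div_le_iff₀ hsupos]; nlinarith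
  set f : ℝ → ℝ := fun x =>
    A * Real.sin (x / 0.45) - 2 * 0.2025 * Real.cos (x / 0.45) - x ^ 2 + 2 * 0.2025 with hf
  have hfc : Continuous f := by
    apply Continuous.add
    apply Continuous.sub
    apply Continuous.sub
    · exact continuous_const.mul (Real.continuous_sin.comp (continuous_id.div_const _))
    · exact continuous_const.mul (Real.continuous_cos.comp (continuous_id.div_const _))
    · exact continuous_pow 2
    · exact continuous_const
  -- integral of f
  have hderiv : ∀ x ∈ Set.uIcc (0:ℝ) 1,
      HasDerivAt (fun y => -A * 0.45 * Real.cos (y / 0.45)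
        - 2 * 0.2025 * 0.45 * Real.sin (y / 0.45) - y ^ 3 / 3 + 2 * 0.2025 * y) (f x) x := by
    intro x _
    have hdiv : HasDerivAt (fun y : ℝ => y / 0.45) (1 / 0.45) x := by
      simpa using (hasDerivAt_id x).div_const 0.45
    have hc : HasDerivAt (fun y => Real.cos (y / 0.45)) (-Real.sin (x / 0.45) * (1 / 0.45)) x :=
      (Real.hasDerivAt_cos _).comp x hdiv
    have hsn : HasDerivAt (fun y => Real.sin (y / 0.45)) (Real.cos (x / 0.45) * (1 / 0.45)) x :=
      (Real.hasDerivAt_sin _).comp x hdiv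
    have h := (((hc.const_mul (-A * 0.45)).sub (hsn.const_mul (2 * 0.2025 * 0.45))).sub
      ((hasDerivAt_pow 3 x).div_const 3)).add ((hasDerivAt_id x).const_mul (2 * 0.2025))
    refine h.congr_deriv ?_
    rw [hf]; push_cast; ring_nf
  have hI := intervalIntegral.integral_eq_sub_of_hasDerivAt hderiv (hfc.intervalIntegrable _ _)
  have hIf : (0.23:ℝ) ≤ ∫ x in (0:ℝ)..1, f x := by
    rw [hI]
    rw [show (1:ℝ)/0.45 = 20/9 by norm_num, show (0:ℝ)/0.45 = 0 by norm_num,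
      Real.cos_zero, Real.sin_zero]
    nlinarith
  -- from ∫ f to ∫ f²
  have hmono : (∫ x in (0:ℝ)..1, (2 * 0.23 * f x - 0.23 ^ 2)) ≤ ∫ x in (0:ℝ)..1, (f x) ^ 2 := by
    apply intervalIntegral.integral_mono_on (by norm_num)
    · exact ((continuous_const.mul hfc).sub continuous_const).intervalIntegrable _ _
    · exact (hfc.pow 2).intervalIntegrable _ _
    · intro x _; nlinarith [sq_nonneg (f x - 0.23)]
  rw [intervalIntegral.integral_sub (f := fun x => 2 * 0.23 * f x) (g := fun _ => (0.23:ℝ) ^ 2) ((continuous_const.mul hfc).intervalIntegrable _ _)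
    (continuous_const.intervalIntegrable _ _), intervalIntegral.integral_const_mul,
    intervalIntegral.integral_const] at hmono
  have : (∫ x in (0:ℝ)..1, (f x) ^ 2) = ∫ x in (0:ℝ)..1,
      (A * Real.sin (x / 0.45) - 2 * 0.2025 * Real.cos (x / 0.45) - x ^ 2 + 2 * 0.2025) ^ 2 := rfl
  rw [← this]
  simp only [smul_eq_mul] at hmono
  nlinarith

private lemma quintic_bound {t : ℝ} (h0 : 0 ≤ t) (h1 : t ≤ 50/27) :
    t - t^3/6 + t^5/120 ≤ 1.02 := by
  have h20 : 0 ≤ (t^3) * (20 - t^2) := by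
    apply mul_nonneg (pow_nonneg h0 3); nlinarith
  rcases le_or_gt t 1.02 with h | h
  · nlinarith
  · nlinarith [mul_nonneg (le_of_lt (by linarith : (0:ℝ) < t - 1.02)) (by linarith : (0:ℝ) ≤ 50/27 - t),
      sq_nonneg (t - 1.59),
      mul_nonneg (mul_nonneg (le_of_lt (by linarith : (0:ℝ) < t - 1.02)) (by linarith : (0:ℝ) ≤ 50/27 - t)) (sq_nonneg (t-1.59)),
      mul_nonneg (sq_nonneg (t-1.59)) (le_of_lt (by linarith : (0:ℝ) < t - 1.02))]

private lemma pt_core {A t : ℝ} (hA1 : (0.263:ℝ) ≤ A) (hA2 : A ≤ 0.266)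
    (ht0 : 0 ≤ t) (ht1 : t ≤ 50/27) :
    (A * Real.sin t - 2 * 0.2916 * Real.cos t - 0.2916 * t^2 + 2 * 0.2916) ^ 2
      ≤ (0.286:ℝ) ^ 2 := by
  have hs5 := sin_le_t5 ht0
  have hs3 := sin_ge_t3 ht0
  have hc2 := Real.one_sub_sq_div_two_le_cos (x := t)
  have hc4 := cos_le_t4 ht0
  have hq := quintic_bound ht0 ht1
  have hq30 : 0 ≤ t - t^3/6 := by
    nlinarith [mul_nonneg ht0 (by nlinarith : (0:ℝ) ≤ 6 - t^2)]
  have hq0 : 0 ≤ t - t^3/6 + t^5/120 := by nlinarith [hq30, pow_nonneg ht0 5]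
  have hup : A * Real.sin t - 2 * 0.2916 * Real.cos t - 0.2916 * t^2 + 2 * 0.2916 ≤ 0.272 := by
    have h1 : A * Real.sin t ≤ A * (t - t^3/6 + t^5/120) :=
      mul_le_mul_of_nonneg_left hs5 (by linarith)
    have h2 : A * (t - t^3/6 + t^5/120) ≤ 0.266 * 1.02 := by nlinarith
    nlinarith
  have hlo : (-0.286:ℝ) ≤ A * Real.sin t - 2 * 0.2916 * Real.cos t - 0.2916 * t^2 + 2 * 0.2916 := by
    have h1 : A * (t - t^3/6) ≤ A * Real.sin t := mul_le_mul_of_nonneg_left hs3 (by linarith)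
    have h2 : (0:ℝ) ≤ A * (t - t^3/6) := mul_nonneg (by linarith) hq30
    have ht4 : t^4 ≤ (50/27)^4 := pow_le_pow_left₀ ht0 ht1 4
    nlinarith
  nlinarith

private lemma upEnd (A : ℝ)
    (hA : A = (1 - 2 * 0.2916 + 2 * 0.2916 * Real.cos (50/27)) / Real.sin (50/27)) :
    (∫ x in (0:ℝ)..1,
      (A * Real.sin (x / 0.54) - 2 * 0.2916 * Real.cos (x / 0.54) - x ^ 2 + 2 * 0.2916) ^ 2)
      ≤ 0.081796 := by
  have hsv1 : Real.sin (50/27) ≤ 0.9608 := le_trans (sin_le_t9 (by norm_num)) (by norm_num)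
  have hsv2 : (0.96:ℝ) ≤ Real.sin (50/27) := le_trans (by norm_num) (sin_ge_t7 (by norm_num))
  have hcv1 : Real.cos (50/27) ≤ -0.2772 := le_trans (cos_le_t8 (by norm_num)) (by norm_num)
  have hcv2 : (-0.2807:ℝ) ≤ Real.cos (50/27) := le_trans (by norm_num) (cos_ge_t6 (by norm_num))
  have hsvpos : (0:ℝ) < Real.sin (50/27) := by linarith
  have hA1 : (0.263:ℝ) ≤ A := by rw [hA, le_div_iff₀ hsvpos]; nlinarith
  have hA2 : A ≤ 0.266 := by rw [hA, div_le_iff₀ hsvpos]; nlinarith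
  have hfc : Continuous fun x : ℝ =>
      (A * Real.sin (x / 0.54) - 2 * 0.2916 * Real.cos (x / 0.54) - x ^ 2 + 2 * 0.2916) ^ 2 := by
    apply Continuous.pow
    apply Continuous.add
    apply Continuous.sub
    apply Continuous.sub
    · exact continuous_const.mul (Real.continuous_sin.comp (continuous_id.div_const _))
    · exact continuous_const.mul (Real.continuous_cos.comp (continuous_id.div_const _))
    · exact continuous_pow 2
    · exact continuous_const
  have hmono : (∫ x in (0:ℝ)..1,
      (A * Real.sin (x / 0.54) - 2 * 0.2916 * Real.cos (x / 0.54) - x ^ 2 + 2 * 0.2916) ^ 2)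
      ≤ ∫ _x in (0:ℝ)..1, (0.286:ℝ) ^ 2 := by
    apply intervalIntegral.integral_mono_on (by norm_num)
    · exact hfc.intervalIntegrable _ _
    · exact continuous_const.intervalIntegrable _ _
    · intro x hx
      have hx2 : x ^ 2 = 0.2916 * (x / 0.54) ^ 2 := by
        field_simp; ring
      rw [hx2]
      exact pt_core hA1 hA2 (div_nonneg hx.1 (by norm_num)) (by
        rw [div_le_iff₀ (by norm_num : (0:ℝ) < 0.54)]
        have := hx.2; linarith)
  rw [intervalIntegral.integral_const] at hmono
  simp only [smul_eq_mul] at hmono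
  nlinarith

private noncomputable def gg : ℝ → ℝ := fun α => min (max α 0.2025) 0.2916

private noncomputable def HH : ℝ → ℝ := fun α =>
  Real.sqrt (∫ x in (0:ℝ)..1,
    ((1 - 2 * gg α + 2 * gg α * Real.cos (1 / Real.sqrt (gg α))) / Real.sin (1 / Real.sqrt (gg α)) *
        Real.sin (x / Real.sqrt (gg α)) -
      2 * gg α * Real.cos (x / Real.sqrt (gg α)) - x ^ 2 + 2 * gg α) ^ 2)

private lemma gg_lb (α : ℝ) : 0.2025 ≤ gg α := le_min (le_max_right _ _) (by norm_num)
private lemma gg_ub (α : ℝ) : gg α ≤ 0.2916 := min_le_right _ _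
private lemma gg_eq {α : ℝ} (h : α ∈ Set.Icc (0.2025:ℝ) 0.2916) : gg α = α := by
  unfold gg
  rw [max_eq_left h.1, min_eq_left h.2]

private lemma sqrt2025 : Real.sqrt 0.2025 = 0.45 := by
  rw [show (0.2025:ℝ) = 0.45 ^ 2 by norm_num]; exact Real.sqrt_sq (by norm_num)
private lemma sqrt2916 : Real.sqrt 0.2916 = 0.54 := by
  rw [show (0.2916:ℝ) = 0.54 ^ 2 by norm_num]; exact Real.sqrt_sq (by norm_num)

private lemma sqrt_gg_lb (α : ℝ) : 0.45 ≤ Real.sqrt (gg α) := by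
  have := Real.sqrt_le_sqrt (gg_lb α)
  rwa [sqrt2025] at this
private lemma sqrt_gg_ub (α : ℝ) : Real.sqrt (gg α) ≤ 0.54 := by
  have := Real.sqrt_le_sqrt (gg_ub α)
  rwa [sqrt2916] at this
private lemma sqrt_gg_ne (α : ℝ) : Real.sqrt (gg α) ≠ 0 := by
  have := sqrt_gg_lb α; intro h; rw [h] at this; norm_num at this

private lemma sin_gg_pos (α : ℝ) : 0 < Real.sin (1 / Real.sqrt (gg α)) := by
  have h1 : (0:ℝ) < 1 / Real.sqrt (gg α) := by
    apply div_pos one_pos; linarith [sqrt_gg_lb α]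
  apply Real.sin_pos_of_pos_of_lt_pi h1
  have h2 : 1 / Real.sqrt (gg α) ≤ 1 / 0.45 :=
    one_div_le_one_div_of_le (by norm_num) (sqrt_gg_lb α)
  have := Real.pi_gt_d6
  calc 1 / Real.sqrt (gg α) ≤ 1 / 0.45 := h2
    _ < Real.pi := by
      rw [show (1:ℝ)/0.45 = 20/9 by norm_num]; linarith

private lemma HH_cont : Continuous HH := by
  have hgc : Continuous gg := (continuous_id.max continuous_const).min continuous_const
  have hsqc : Continuous fun α => Real.sqrt (gg α) := Real.continuous_sqrt.comp hgc
  have hwc : Continuous fun α => 1 / Real.sqrt (gg α) :=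
    continuous_const.div hsqc sqrt_gg_ne
  have hg1 : Continuous fun p : ℝ × ℝ => gg p.1 := hgc.comp continuous_fst
  have hw1 : Continuous fun p : ℝ × ℝ => 1 / Real.sqrt (gg p.1) := hwc.comp continuous_fst
  have hnum : Continuous fun p : ℝ × ℝ =>
      1 - 2 * gg p.1 + 2 * gg p.1 * Real.cos (1 / Real.sqrt (gg p.1)) :=
    (continuous_const.sub (continuous_const.mul hg1)).add
      ((continuous_const.mul hg1).mul (Real.continuous_cos.comp hw1))
  have hden : Continuous fun p : ℝ × ℝ => Real.sin (1 / Real.sqrt (gg p.1)) :=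
    Real.continuous_sin.comp hw1
  have c1 : Continuous fun p : ℝ × ℝ =>
      (1 - 2 * gg p.1 + 2 * gg p.1 * Real.cos (1 / Real.sqrt (gg p.1))) /
        Real.sin (1 / Real.sqrt (gg p.1)) :=
    hnum.div hden fun p => ne_of_gt (sin_gg_pos p.1)
  have c2 : Continuous fun p : ℝ × ℝ => Real.sin (p.2 / Real.sqrt (gg p.1)) :=
    Real.continuous_sin.comp (continuous_snd.div (hsqc.comp continuous_fst)
      fun p => sqrt_gg_ne p.1)
  have c3 : Continuous fun p : ℝ × ℝ => Real.cos (p.2 / Real.sqrt (gg p.1)) :=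
    Real.continuous_cos.comp (continuous_snd.div (hsqc.comp continuous_fst)
      fun p => sqrt_gg_ne p.1)
  have hFc : Continuous fun p : ℝ × ℝ =>
      ((1 - 2 * gg p.1 + 2 * gg p.1 * Real.cos (1 / Real.sqrt (gg p.1))) /
          Real.sin (1 / Real.sqrt (gg p.1)) * Real.sin (p.2 / Real.sqrt (gg p.1)) -
        2 * gg p.1 * Real.cos (p.2 / Real.sqrt (gg p.1)) - p.2 ^ 2 + 2 * gg p.1) ^ 2 :=
    ((((c1.mul c2).sub ((continuous_const.mul hg1).mul c3)).sub
      (continuous_snd.pow 2)).add (continuous_const.mul hg1)).pow 2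
  have hIc : Continuous fun α : ℝ => ∫ x in (0:ℝ)..1,
      ((1 - 2 * gg α + 2 * gg α * Real.cos (1 / Real.sqrt (gg α))) /
          Real.sin (1 / Real.sqrt (gg α)) * Real.sin (x / Real.sqrt (gg α)) -
        2 * gg α * Real.cos (x / Real.sqrt (gg α)) - x ^ 2 + 2 * gg α) ^ 2 :=
    intervalIntegral.continuous_parametric_intervalIntegral_of_continuous'
      (f := fun (α : ℝ) (x : ℝ) =>
        ((1 - 2 * gg α + 2 * gg α * Real.cos (1 / Real.sqrt (gg α))) /
            Real.sin (1 / Real.sqrt (gg α)) * Real.sin (x / Real.sqrt (gg α)) -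
          2 * gg α * Real.cos (x / Real.sqrt (gg α)) - x ^ 2 + 2 * gg α) ^ 2)
      (by exact hFc) 0 1
  exact Real.continuous_sqrt.comp hIc

theorem stmt_17 (G₁ : ℝ → ℝ)
    (hG₁ : ∀ α ∈ Set.Icc (0.1:ℝ) 0.3, G₁ α =
      Real.sqrt (∫ x in (0:ℝ)..1,
        ((1 - 2 * α + 2 * α * Real.cos (1 / Real.sqrt α)) / Real.sin (1 / Real.sqrt α) *
            Real.sin (x / Real.sqrt α) -
          2 * α * Real.cos (x / Real.sqrt α) - x ^ 2 + 2 * α) ^ 2)) :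
    ∃ α ∈ Set.Icc (0.1:ℝ) 0.3, α = G₁ α := by
  have hHa : (0.2025:ℝ) < HH 0.2025 := by
    unfold HH
    rw [gg_eq (by norm_num : (0.2025:ℝ) ∈ Set.Icc (0.2025:ℝ) 0.2916)]
    rw [sqrt2025, show (1:ℝ)/0.45 = 20/9 by norm_num]
    have hlow := lowEnd _ rfl
    refine lt_of_lt_of_le (by norm_num : (0.2025:ℝ) < 0.23) ?_
    exact (Real.le_sqrt (by norm_num) (le_trans (by norm_num) hlow)).2
      (le_trans (by norm_num) hlow)
  have hHb : HH 0.2916 ≤ 0.286 := by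
    unfold HH
    rw [gg_eq (by norm_num : (0.2916:ℝ) ∈ Set.Icc (0.2025:ℝ) 0.2916)]
    rw [sqrt2916, show (1:ℝ)/0.54 = 50/27 by norm_num]
    refine le_trans (Real.sqrt_le_sqrt (upEnd _ rfl)) ?_
    rw [show (0.081796:ℝ) = 0.286 ^ 2 by norm_num]
    exact le_of_eq (Real.sqrt_sq (by norm_num))
  have hcont : Continuous fun α => HH α - α := HH_cont.sub continuous_id
  have hiv := intermediate_value_Icc' (by norm_num : (0.2025:ℝ) ≤ 0.2916) hcont.continuousOn
  have h0mem : (0:ℝ) ∈ Set.Icc ((fun α => HH α - α) 0.2916) ((fun α => HH α - α) 0.2025) := by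
    constructor
    · simp only; linarith
    · simp only; linarith
  obtain ⟨α₀, hmem, heq⟩ := hiv h0mem
  simp only at heq
  have hH0 : HH α₀ = α₀ := by linarith
  refine ⟨α₀, ⟨by linarith [hmem.1], by linarith [hmem.2]⟩, ?_⟩
  rw [hG₁ α₀ ⟨by linarith [hmem.1], by linarith [hmem.2]⟩]
  calc α₀ = HH α₀ := hH0.symm
    _ = _ := by unfold HH; rw [gg_eq hmem]
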